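/- Let n ≥ 3, p ∈ (0,1), and X₁,...,Xₙ i.i.d. Bernoulli(p). For any j ∈ {2,...,n-1}, E[X_{j-1}Xⱼ/(X₁+...+X_{n-1}) | X₁+...+X_{n-1} ≠ 0] = (p/(1-(1-p)^{n-1}) - 1/(n-1))/(n-2). -/

import Mathlib

/-- Probability weight of a Bernoulli(p) outcome. -/
def bw (p : ℝ) (b : Bool) : ℝ := if b then p else 1 - p

/-- The 0/1 real value of the `j`-th coordinate (0-based) of `x`, or `0` if out of range. -/
def bval {n : ℕ} (x : Fin n → Bool) (j : ℕ) : ℝ :=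
  if h : j < n then (if x ⟨j, h⟩ then 1 else 0) else 0

open Finset

namespace HotHandAux

/-- 0/1 indicator value of a Bool. -/
def ind (b : Bool) : ℝ := if b then 1 else 0

/-- The Bernoulli product weight. -/
def W (p : ℝ) {n : ℕ} (x : Fin n → Bool) : ℝ := ∏ i, bw p (x i)

/-- Sum of the first `m` coordinates. -/
def S {n : ℕ} (m : ℕ) (hm : m < n) (x : Fin n → Bool) : ℝ :=
  ∑ i ∈ Finset.Iio (⟨m, hm⟩ : Fin n), ind (x i)

lemma ind_sq (b : Bool) : ind b * ind b = ind b := by cases b <;> simp [ind]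

lemma key {n : ℕ} (g : Fin n → Bool → ℝ) :
    ∑ x : Fin n → Bool, ∏ i, g i (x i) = ∏ i, ∑ b, g i b := (Fintype.prod_sum g).symm

lemma S_eq {n m : ℕ} (hm : m < n) (x : Fin n → Bool) :
    ∑ i ∈ Finset.range m, bval x i = S m hm x := by
  refine Finset.sum_bij' (fun a ha => (⟨a, lt_trans (Finset.mem_range.mp ha) hm⟩ : Fin n))
    (fun a _ => (a : ℕ)) ?_ ?_ ?_ ?_ ?_
  · intro a ha; simp [Fin.lt_def, Finset.mem_range.mp ha]
  · intro a ha; simpa [Fin.lt_def] using ha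
  · intro a ha; simp
  · intro a ha; simp
  · intro a ha; simp [bval, ind, lt_trans (Finset.mem_range.mp ha) hm]

lemma W_total {n : ℕ} (p : ℝ) : ∑ x : Fin n → Bool, W p x = 1 := by
  rw [show (fun x : Fin n → Bool => W p x) = fun x => ∏ i, bw p (x i) from rfl, key]
  refine Finset.prod_eq_one fun i _ => ?_
  simp [bw]

lemma E_coord {n : ℕ} (p : ℝ) (a : Fin n) :
    ∑ x : Fin n → Bool, W p x * ind (x a) = p := by
  have h : ∀ x : Fin n → Bool,
      W p x * ind (x a) = ∏ i : Fin n, (bw p (x i) * (if i = a then ind (x i) else 1)) := by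
    intro x
    rw [Finset.prod_mul_distrib, Finset.prod_ite_eq' Finset.univ a (fun i => ind (x i))]
    simp [W]
  rw [Finset.sum_congr rfl (fun x _ => h x), key (fun i b => bw p b * (if i = a then ind b else 1))]
  have h2 : ∀ i : Fin n, (∑ b, bw p b * (if i = a then ind b else 1))
      = (if i = a then p else 1) := by
    intro i; by_cases hi : i = a <;> simp [hi, bw, ind]
  rw [Finset.prod_congr rfl (fun i _ => h2 i),
    Finset.prod_ite_eq' Finset.univ a (fun _ => p)]
  simp

lemma indicator_S_zero {n m : ℕ} (hm : m < n) (x : Fin n → Bool) :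
    (if S m hm x = 0 then (1:ℝ) else 0)
      = ∏ i : Fin n, (if (i:ℕ) < m then 1 - ind (x i) else 1) := by
  by_cases h : S m hm x = 0
  · rw [if_pos h]
    have hall : ∀ i : Fin n, (i:ℕ) < m → x i = false := by
      intro i hi
      have hz := (Finset.sum_eq_zero_iff_of_nonneg (fun i _ => by
        cases x i <;> simp [ind])).mp h i (by simp [Fin.lt_def, hi])
      cases hxi : x i
      · rfl
      · exfalso; rw [hxi] at hz; simp [ind] at hz
    symm; refine Finset.prod_eq_one fun i _ => ?_
    by_cases hi : (i:ℕ) < m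
    · simp [hi, hall i hi, ind]
    · simp [hi]
  · rw [if_neg h]
    have hex : ∃ i : Fin n, (i:ℕ) < m ∧ x i = true := by
      by_contra hc
      push_neg at hc
      exact h (Finset.sum_eq_zero fun i hi => by
        have hi' : (i:ℕ) < m := by simpa [Fin.lt_def] using hi
        have hfalse : x i = false := by
          cases hxi : x i
          · rfl
          · exact absurd hxi (hc i hi')
        simp [ind, hfalse])
    obtain ⟨i, hi, hxi⟩ := hex
    symm
    exact Finset.prod_eq_zero (Finset.mem_univ i) (by simp [hi, hxi, ind])

lemma E_S_zero {n m : ℕ} (p : ℝ) (hm : m < n) :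
    ∑ x : Fin n → Bool, W p x * (if S m hm x = 0 then 1 else 0) = (1-p)^m := by
  have h : ∀ x : Fin n → Bool, W p x * (if S m hm x = 0 then (1:ℝ) else 0)
      = ∏ i : Fin n, (bw p (x i) * (if (i:ℕ) < m then 1 - ind (x i) else 1)) := by
    intro x
    rw [indicator_S_zero hm x, W, ← Finset.prod_mul_distrib]
  rw [Finset.sum_congr rfl (fun x _ => h x), key (fun i b => bw p b * (if (i:ℕ) < m then 1 - ind b else 1))]
  have h2 : ∀ i : Fin n, (∑ b, bw p b * (if (i:ℕ) < m then 1 - ind b else 1))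
      = (if (i:ℕ) < m then 1-p else 1) := by
    intro i; by_cases hi : (i:ℕ) < m <;> simp [hi, bw, ind] <;> ring
  rw [Finset.prod_congr rfl (fun i _ => h2 i), Finset.prod_ite, Finset.prod_const,
    Finset.prod_const_one, mul_one]
  congr 1
  have : Finset.univ.filter (fun i : Fin n => (i:ℕ) < m) = Finset.Iio (⟨m, hm⟩ : Fin n) := by
    ext i; simp [Fin.lt_def]
  rw [this, Fin.card_Iio]

lemma E_S {n m : ℕ} (p : ℝ) (hm : m < n) :
    ∑ x : Fin n → Bool, W p x * S m hm x = m * p := by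
  have h : ∀ x : Fin n → Bool, W p x * S m hm x
      = ∑ i ∈ Finset.Iio (⟨m, hm⟩ : Fin n), W p x * ind (x i) := by
    intro x; rw [S, Finset.mul_sum]
  rw [Finset.sum_congr rfl (fun x _ => h x), Finset.sum_comm,
    Finset.sum_congr rfl (fun i _ => E_coord p i), Finset.sum_const, Fin.card_Iio]
  simp [mul_comm]

lemma E_pos {n m : ℕ} (p : ℝ) (hm : m < n) :
    ∑ x : Fin n → Bool, W p x * (if S m hm x ≠ 0 then (1:ℝ) else 0) = 1 - (1-p)^m := by
  have h : ∀ x : Fin n → Bool, W p x * (if S m hm x ≠ 0 then (1:ℝ) else 0)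
      = W p x - W p x * (if S m hm x = 0 then 1 else 0) := by
    intro x; by_cases hS : S m hm x = 0 <;> simp [hS]
  rw [Finset.sum_congr rfl (fun x _ => h x), Finset.sum_sub_distrib, W_total, E_S_zero]

lemma perm_invariant {n : ℕ} (p : ℝ) (σ : Equiv.Perm (Fin n)) (F : (Fin n → Bool) → ℝ) :
    ∑ x : Fin n → Bool, W p x * F (x ∘ σ) = ∑ x : Fin n → Bool, W p x * F x := by
  refine Fintype.sum_equiv (Equiv.arrowCongr σ.symm (Equiv.refl Bool)) _ _ fun x => ?_
  have h1 : (Equiv.arrowCongr σ.symm (Equiv.refl Bool)) x = x ∘ σ := by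
    ext i; simp [Equiv.arrowCongr]
  rw [h1]
  have h2 : W p ((fun i => x (σ.symm.symm i)) : Fin n → Bool) = W p x := by
    rw [W, W]
    exact Equiv.prod_comp σ (fun i => bw p (x i))
  simpa [Function.comp_def] using congrArg (· * F (x ∘ σ)) h2.symm

lemma S_comp {n m : ℕ} (hm : m < n) (σ : Equiv.Perm (Fin n))
    (hσ : ∀ i : Fin n, ((σ i : Fin n) : ℕ) < m ↔ (i:ℕ) < m) (x : Fin n → Bool) :
    S m hm (x ∘ σ) = S m hm x := by
  refine Finset.sum_equiv σ (fun i => ?_) (fun i _ => rfl)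
  simp [Fin.lt_def, hσ i]

/-- The off-diagonal term. -/
noncomputable def A (p : ℝ) {n : ℕ} (m : ℕ) (hm : m < n) (a b : Fin n) : ℝ :=
  ∑ x : Fin n → Bool, W p x * (if S m hm x ≠ 0 then ind (x a) * ind (x b) / S m hm x else 0)

lemma A_perm {n m : ℕ} (p : ℝ) (hm : m < n) (σ : Equiv.Perm (Fin n))
    (hσ : ∀ i : Fin n, ((σ i : Fin n) : ℕ) < m ↔ (i:ℕ) < m) (a b : Fin n) :
    A p m hm (σ a) (σ b) = A p m hm a b := by
  have h : ∀ x : Fin n → Bool,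
      W p x * (if S m hm x ≠ 0 then ind (x (σ a)) * ind (x (σ b)) / S m hm x else 0)
      = W p x * (if S m hm (x ∘ σ) ≠ 0 then
          ind ((x ∘ σ) a) * ind ((x ∘ σ) b) / S m hm (x ∘ σ) else 0) := by
    intro x; rw [S_comp hm σ hσ]; rfl
  rw [A, Finset.sum_congr rfl (fun x _ => h x),
    perm_invariant p σ (fun y => if S m hm y ≠ 0 then ind (y a) * ind (y b) / S m hm y else 0)]
  rfl

lemma swap_lt {n m : ℕ} {u v : Fin n} (hu : (u:ℕ) < m) (hv : (v:ℕ) < m) (i : Fin n) :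
    ((Equiv.swap u v i : Fin n) : ℕ) < m ↔ (i:ℕ) < m := by
  rcases eq_or_ne i u with rfl | hiu
  · simp [Equiv.swap_apply_left, hu, hv]
  rcases eq_or_ne i v with rfl | hiv
  · simp [Equiv.swap_apply_right, hu, hv]
  · rw [Equiv.swap_apply_of_ne_of_ne hiu hiv]

lemma A_eq {n m : ℕ} (p : ℝ) (hm : m < n) {a b a' b' : Fin n}
    (ha : (a:ℕ) < m) (hb : (b:ℕ) < m) (ha' : (a':ℕ) < m) (hb' : (b':ℕ) < m)
    (hab : a ≠ b) (hab' : a' ≠ b') : A p m hm a b = A p m hm a' b' := by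
  set σ₁ := Equiv.swap a a' with hσ₁
  have hc : (σ₁ b : ℕ) < m := by
    rcases eq_or_ne b a' with rfl | h1
    · simpa [hσ₁, Equiv.swap_apply_right] using ha
    · rw [hσ₁, Equiv.swap_apply_of_ne_of_ne hab.symm h1]; exact hb
  have hca' : σ₁ b ≠ a' := by
    intro h
    exact hab.symm (σ₁.injective (h.trans (Equiv.swap_apply_left a a').symm))
  set σ₂ := Equiv.swap (σ₁ b) b' with hσ₂
  set σ := σ₁.trans σ₂ with hσdef
  have hσ : ∀ i : Fin n, ((σ i : Fin n) : ℕ) < m ↔ (i:ℕ) < m := by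
    intro i
    rw [hσdef, Equiv.trans_apply, swap_lt hc hb', swap_lt ha ha']
  have hσa : σ a = a' := by
    rw [hσdef, Equiv.trans_apply, hσ₁, Equiv.swap_apply_left, hσ₂,
      Equiv.swap_apply_of_ne_of_ne (Ne.symm hca') hab']
  have hσb : σ b = b' := by
    rw [hσdef, Equiv.trans_apply, hσ₂, Equiv.swap_apply_left]
  rw [← hσa, ← hσb, A_perm p hm σ hσ a b]

lemma inner_sum {n m : ℕ} (hm : m < n) (x : Fin n → Bool) :
    ∑ a ∈ Finset.Iio (⟨m, hm⟩ : Fin n), ∑ b ∈ (Finset.Iio (⟨m, hm⟩ : Fin n)).erase a,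
      (if S m hm x ≠ 0 then ind (x a) * ind (x b) / S m hm x else 0)
      = (if S m hm x ≠ 0 then S m hm x - 1 else 0) := by
  by_cases hS : S m hm x = 0
  · simp [hS]
  · simp only [ne_eq, hS, not_false_iff, if_true]
    have h1 : ∀ a ∈ Finset.Iio (⟨m, hm⟩ : Fin n),
        ∑ b ∈ (Finset.Iio (⟨m, hm⟩ : Fin n)).erase a,
          ind (x a) * ind (x b) / S m hm x
        = ind (x a) * (S m hm x - ind (x a)) / S m hm x := by
      intro a ha
      rw [← Finset.sum_div, ← Finset.mul_sum, Finset.sum_erase_eq_sub ha]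
      rfl
    rw [Finset.sum_congr rfl h1, ← Finset.sum_div]
    have h2 : ∑ a ∈ Finset.Iio (⟨m, hm⟩ : Fin n), ind (x a) * (S m hm x - ind (x a))
        = S m hm x * S m hm x - S m hm x := by
      rw [Finset.sum_congr rfl (fun a _ => by rw [mul_sub, ind_sq])]
      rw [Finset.sum_sub_distrib, ← Finset.sum_mul, ← S]
    rw [h2]
    field_simp

lemma pair_sum {n m : ℕ} (p : ℝ) (hm : m < n) :
    ∑ a ∈ Finset.Iio (⟨m, hm⟩ : Fin n), ∑ b ∈ (Finset.Iio (⟨m, hm⟩ : Fin n)).erase a,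
      A p m hm a b = m * p - (1 - (1-p)^m) := by
  have step1 : ∀ a ∈ Finset.Iio (⟨m, hm⟩ : Fin n),
      ∑ b ∈ (Finset.Iio (⟨m, hm⟩ : Fin n)).erase a, A p m hm a b
      = ∑ x : Fin n → Bool, ∑ b ∈ (Finset.Iio (⟨m, hm⟩ : Fin n)).erase a,
          W p x * (if S m hm x ≠ 0 then ind (x a) * ind (x b) / S m hm x else 0) :=
    fun a _ => Finset.sum_comm
  rw [Finset.sum_congr rfl step1, Finset.sum_comm]
  have step2 : ∀ x : Fin n → Bool,
      ∑ a ∈ Finset.Iio (⟨m, hm⟩ : Fin n), ∑ b ∈ (Finset.Iio (⟨m, hm⟩ : Fin n)).erase a,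
        W p x * (if S m hm x ≠ 0 then ind (x a) * ind (x b) / S m hm x else 0)
      = W p x * (if S m hm x ≠ 0 then S m hm x - 1 else 0) := by
    intro x
    rw [← inner_sum hm x, Finset.mul_sum]
    exact Finset.sum_congr rfl fun a _ => by rw [Finset.mul_sum]
  rw [Finset.sum_congr rfl (fun x _ => step2 x)]
  have step3 : ∀ x : Fin n → Bool,
      W p x * (if S m hm x ≠ 0 then S m hm x - 1 else 0)
      = W p x * S m hm x - W p x * (if S m hm x ≠ 0 then 1 else 0) := by
    intro x; by_cases hS : S m hm x = 0 <;> simp [hS] <;> ring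
  rw [Finset.sum_congr rfl (fun x _ => step3 x), Finset.sum_sub_distrib, E_S p hm, E_pos p hm]

end HotHandAux

open HotHandAux in
/-- For `j ∈ {2,...,n-1}`,
`E[X_{j-1}Xⱼ/(X₁+...+X_{n-1}) | X₁+...+X_{n-1} ≠ 0]
  = (p/(1-(1-p)^(n-1)) - 1/(n-1))/(n-2)`.  (`X_j` is the coordinate `j-1` of `x`.) -/
theorem hot_hand_middle_term (n : ℕ) (hn : 3 ≤ n) (p : ℝ) (hp0 : 0 < p) (hp1 : p < 1)
    (j : ℕ) (hj2 : 2 ≤ j) (hjn : j ≤ n - 1) :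
    (∑ x : Fin n → Bool, (∏ i, bw p (x i)) *
        (if (∑ i ∈ Finset.range (n - 1), bval x i) ≠ 0 then
          bval x (j - 2) * bval x (j - 1) / (∑ i ∈ Finset.range (n - 1), bval x i)
        else 0)) /
      (∑ x : Fin n → Bool, (∏ i, bw p (x i)) *
        (if (∑ i ∈ Finset.range (n - 1), bval x i) ≠ 0 then 1 else 0))
      = (p / (1 - (1 - p) ^ (n - 1)) - 1 / (n - 1)) / (n - 2) := by
  have hm : n - 1 < n := by omega
  set m := n - 1 with hmdef
  have hm2 : 2 ≤ m := by omega
  -- index bounds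
  have hja : j - 2 < m := by omega
  have hjb : j - 1 < m := by omega
  have hjan : j - 2 < n := by omega
  have hjbn : j - 1 < n := by omega
  set a : Fin n := ⟨j - 2, hjan⟩ with hadef
  set b : Fin n := ⟨j - 1, hjbn⟩ with hbdef
  have hab : a ≠ b := by
    intro h
    have := congrArg Fin.val h
    simp [hadef, hbdef] at this
    omega
  -- rewrite numerator as A
  have hnum : (∑ x : Fin n → Bool, (∏ i, bw p (x i)) *
        (if (∑ i ∈ Finset.range m, bval x i) ≠ 0 then
          bval x (j - 2) * bval x (j - 1) / (∑ i ∈ Finset.range m, bval x i)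
        else 0)) = A p m hm a b := by
    refine Finset.sum_congr rfl fun x _ => ?_
    rw [S_eq hm x]
    have h1 : bval x (j - 2) = ind (x a) := by simp [bval, ind, hjan, hadef]
    have h2 : bval x (j - 1) = ind (x b) := by simp [bval, ind, hjbn, hbdef]
    rw [h1, h2]
    rfl
  have hden : (∑ x : Fin n → Bool, (∏ i, bw p (x i)) *
        (if (∑ i ∈ Finset.range m, bval x i) ≠ 0 then (1:ℝ) else 0)) = 1 - (1-p)^m := by
    rw [← E_pos p hm]
    refine Finset.sum_congr rfl fun x _ => ?_
    rw [S_eq hm x]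
    rfl
  rw [hnum, hden]
  -- all off-diagonal terms equal
  have hall : ∀ a' ∈ Finset.Iio (⟨m, hm⟩ : Fin n),
      ∀ b' ∈ (Finset.Iio (⟨m, hm⟩ : Fin n)).erase a', A p m hm a' b' = A p m hm a b := by
    intro a' ha' b' hb'
    have ha'm : (a' : ℕ) < m := by simpa [Fin.lt_def] using ha'
    have hb'm : (b' : ℕ) < m := by
      have := Finset.mem_of_mem_erase hb'
      simpa [Fin.lt_def] using this
    have hab' : a' ≠ b' := (Finset.ne_of_mem_erase hb').symm
    exact A_eq p hm ha'm hb'm hja hjb hab' hab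
  have hcount : ∑ a' ∈ Finset.Iio (⟨m, hm⟩ : Fin n),
      ∑ b' ∈ (Finset.Iio (⟨m, hm⟩ : Fin n)).erase a', A p m hm a' b'
      = (m * (m - 1) : ℕ) * A p m hm a b := by
    rw [Finset.sum_congr rfl (fun a' ha' => Finset.sum_congr rfl (fun b' hb' => hall a' ha' b' hb'))]
    have hcard : ∀ a' ∈ Finset.Iio (⟨m, hm⟩ : Fin n),
        ((Finset.Iio (⟨m, hm⟩ : Fin n)).erase a').card = m - 1 := by
      intro a' ha'
      rw [Finset.card_erase_of_mem ha', Fin.card_Iio]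
    rw [Finset.sum_congr rfl (fun a' ha' => by rw [Finset.sum_const, hcard a' ha'])]
    rw [Finset.sum_const, Fin.card_Iio]
    push_cast
    ring
  have hA : ((m * (m - 1) : ℕ) : ℝ) * A p m hm a b = m * p - (1 - (1-p)^m) := by
    rw [← hcount, pair_sum p hm]
  -- numbers
  have hD : (0:ℝ) < 1 - (1-p)^m := by
    have h1 : (1-p)^m < 1 := by
      apply pow_lt_one₀ (by linarith) (by linarith)
      omega
    linarith
  have hmR : ((m:ℕ) : ℝ) = (n:ℝ) - 1 := by
    have : ((m:ℕ):ℝ) = ((n:ℕ):ℝ) - 1 := by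
      rw [hmdef]
      push_cast [Nat.cast_sub (by omega : 1 ≤ n)]
      ring
    exact this
  have hmcast : ((m * (m - 1) : ℕ) : ℝ) = (m:ℝ) * ((m:ℝ) - 1) := by
    push_cast [Nat.cast_sub (by omega : 1 ≤ m)]
    ring
  have hm2R : (2:ℝ) ≤ (m:ℝ) := by exact_mod_cast hm2
  have hmne : (m:ℝ) ≠ 0 := by linarith
  have hm1ne : (m:ℝ) - 1 ≠ 0 := by linarith
  have hDne : (1:ℝ) - (1-p)^m ≠ 0 := ne_of_gt hD
  rw [hmcast] at hA
  have hAval : A p m hm a b = ((m:ℝ)*p - (1-(1-p)^m)) / ((m:ℝ)*((m:ℝ)-1)) := by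
    rw [eq_div_iff (mul_ne_zero hmne hm1ne)]
    linarith [hA]
  rw [hAval, show ((n:ℝ) - 1) = (m:ℝ) from hmR.symm,
    show ((n:ℝ) - 2) = (m:ℝ) - 1 from by rw [hmR]; ring]
  field_simp
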